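/- Failure of composition without the abstraction hypothesis: in the Gaussian SCM X₁=N₁, X₂=N₂, Y=X₁+X₂+N_Y (independent standard normals), the conditional law of X₂ given X₁=x₁, Y=y is N((y−x₁)/2, 1/2). Consequently, composing the inclusion kernel κ₁((x₁,y),·)=δ_{x₁}⊗N((y−x₁)/2,1/2)⊗δ_y (from the (X₁,Y)-space into the (X₁,X₂,Y)-space) with the abstraction kernel κ₂((x₁,x₂,y),·)=δ_{(x₁+x₂,y)} yields κ₃((x₁,y),·)=N((y+x₁)/2,1/2)⊗δ_y, whose first marginal depends on y; hence κ₃(·,A×ℝ) is not σ(X₁)-measurable for general Borel A, so the composed pair is not admissible. -/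

import Mathlib

open MeasureTheory ProbabilityTheory
open Set
open scoped ENNReal NNReal

namespace CompAux

/-- map of a withDensity measure under a measurable equiv. -/
lemma map_withDensity_equiv {α β : Type*} [MeasurableSpace α] [MeasurableSpace β]
    (μ : Measure α) (e : MeasurableEquiv α β) {f : α → ℝ≥0∞} (hf : Measurable f) :
    (μ.withDensity f).map e = (μ.map e).withDensity (fun y => f (e.symm y)) := by
  ext s hs
  rw [Measure.map_apply e.measurable hs, withDensity_apply _ (e.measurable hs),
    withDensity_apply _ hs]
  have h := setLIntegral_map (μ := μ) hs (hf.comp e.symm.measurable) e.measurable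
  simp only [Function.comp] at h
  rw [h]
  refine (setLIntegral_congr_fun_ae (e.measurable hs) (ae_of_all _ fun x _ => ?_))
  simp

lemma gauss_prod : (gaussianReal 0 1).prod (gaussianReal 0 1)
    = (volume : Measure (ℝ × ℝ)).withDensity
        (fun p => gaussianPDF 0 1 p.1 * gaussianPDF 0 1 p.2) := by
  have h1 : gaussianReal 0 1 = volume.withDensity (gaussianPDF 0 1) :=
    gaussianReal_of_var_ne_zero 0 one_ne_zero
  rw [Measure.volume_eq_prod]
  refine Measure.prod_eq fun s t hs ht => ?_
  rw [withDensity_apply _ (hs.prod ht), ← Measure.prod_restrict,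
    lintegral_prod_mul (measurable_gaussianPDF 0 1).aemeasurable
      (measurable_gaussianPDF 0 1).aemeasurable,
    h1, withDensity_apply _ hs, withDensity_apply _ ht]


noncomputable def rot : ℝ × ℝ → ℝ × ℝ :=
  fun p => ((p.1 + p.2) / Real.sqrt 2, (p.1 - p.2) / Real.sqrt 2)

lemma sqrt2_ne : Real.sqrt 2 ≠ 0 := by positivity

lemma rot_invol : ∀ p, rot (rot p) = p := by
  intro p
  have h2 : Real.sqrt 2 * Real.sqrt 2 = 2 := Real.mul_self_sqrt (by norm_num)
  unfold rot
  ext <;> simp only [Prod.fst, Prod.snd] <;> field_simp <;> ring_nf <;> simp [Real.sq_sqrt]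

lemma rot_measurable : Measurable rot := by unfold rot; fun_prop

noncomputable def rotLin : (ℝ × ℝ) →ₗ[ℝ] ℝ × ℝ where
  toFun := rot
  map_add' := by
    intro a b; unfold rot
    ext <;> simp [Prod.fst_add, Prod.snd_add] <;> ring
  map_smul' := by
    intro c a; unfold rot
    ext <;> simp [Prod.smul_fst, Prod.smul_snd, smul_eq_mul] <;> ring

lemma rotLin_det_sq : rotLin.det * rotLin.det = 1 := by
  rw [← LinearMap.det_comp]
  have : rotLin.comp rotLin = LinearMap.id := by
    apply LinearMap.ext; intro p; exact rot_invol p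
  rw [this, LinearMap.det_id]

lemma map_rot_volume : (volume : Measure (ℝ × ℝ)).map rot = volume := by
  have hd : rotLin.det = 1 ∨ rotLin.det = -1 := mul_self_eq_one_iff.mp rotLin_det_sq
  have hne : rotLin.det ≠ 0 := by rcases hd with h | h <;> rw [h] <;> norm_num
  have := Measure.map_linearMap_addHaar_eq_smul_addHaar (volume : Measure (ℝ × ℝ)) hne
  have habs : |rotLin.det⁻¹| = 1 := by rcases hd with h | h <;> rw [h] <;> norm_num
  rw [habs] at this
  have hc : (⇑rotLin : ℝ × ℝ → ℝ × ℝ) = rot := rfl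
  simpa [hc] using this


noncomputable def rotEquiv : MeasurableEquiv (ℝ × ℝ) (ℝ × ℝ) where
  toFun := rot
  invFun := rot
  left_inv := rot_invol
  right_inv := rot_invol
  measurable_toFun := rot_measurable
  measurable_invFun := rot_measurable

lemma pdfReal_rot (p : ℝ × ℝ) :
    gaussianPDFReal 0 1 (rot p).1 * gaussianPDFReal 0 1 (rot p).2
      = gaussianPDFReal 0 1 p.1 * gaussianPDFReal 0 1 p.2 := by
  have h2 : Real.sqrt 2 * Real.sqrt 2 = 2 := Real.mul_self_sqrt (by norm_num)
  simp only [gaussianPDFReal, rot]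
  rw [mul_mul_mul_comm, ← Real.exp_add, mul_mul_mul_comm, ← Real.exp_add]
  congr 1
  have : ((p.1 + p.2) / Real.sqrt 2) ^ 2 + ((p.1 - p.2) / Real.sqrt 2) ^ 2
      = p.1 ^ 2 + p.2 ^ 2 := by
    rw [div_pow, div_pow, sq (Real.sqrt 2), h2]
    ring
  push_cast
  simp only [sub_zero]
  field_simp
  rw [Real.sq_sqrt (by norm_num : (0:ℝ) ≤ 2)]; congr 1; ring

lemma pdf_rot (p : ℝ × ℝ) :
    gaussianPDF 0 1 (rot p).1 * gaussianPDF 0 1 (rot p).2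
      = gaussianPDF 0 1 p.1 * gaussianPDF 0 1 p.2 := by
  simp only [gaussianPDF, ← ENNReal.ofReal_mul (gaussianPDFReal_nonneg 0 1 _)]
  rw [pdfReal_rot]

lemma map_rot_gauss :
    ((gaussianReal 0 1).prod (gaussianReal 0 1)).map rot
      = (gaussianReal 0 1).prod (gaussianReal 0 1) := by
  have hcoe : (rotEquiv : ℝ × ℝ → ℝ × ℝ) = rot := rfl
  have hsymm : (rotEquiv.symm : ℝ × ℝ → ℝ × ℝ) = rot := rfl
  have hd : Measurable fun p : ℝ × ℝ => gaussianPDF 0 1 p.1 * gaussianPDF 0 1 p.2 :=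
    ((measurable_gaussianPDF 0 1).comp measurable_fst).mul
      ((measurable_gaussianPDF 0 1).comp measurable_snd)
  rw [gauss_prod, ← hcoe, map_withDensity_equiv _ rotEquiv hd, hcoe, hsymm, map_rot_volume]
  congr 1
  funext y
  exact pdf_rot y


lemma var_two : (NNReal.mk (Real.sqrt 2 ^ 2) (sq_nonneg _)) * 1 = 2 := by
  ext
  push_cast
  rw [Real.sq_sqrt (by norm_num : (0:ℝ) ≤ 2)]
  norm_num

lemma conv2 :
    ((gaussianReal 0 1).prod (gaussianReal 0 1)).map (fun p : ℝ × ℝ => p.1 + p.2)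
      = gaussianReal 0 2 := by
  have hfun : (fun p : ℝ × ℝ => p.1 + p.2)
      = (fun x : ℝ => Real.sqrt 2 * x) ∘ Prod.fst ∘ rot := by
    funext p
    simp only [Function.comp_apply, rot]
    field_simp
  rw [hfun, ← Function.comp_assoc]
  rw [← Measure.map_map (by fun_prop) rot_measurable, map_rot_gauss,
    ← Measure.map_map (by fun_prop) measurable_fst, Measure.map_fst_prod, measure_univ,
    one_smul, gaussianReal_map_const_mul, mul_zero, var_two]

/-- bind with a kernel of the form `a ↦ map (g (a, ·)) ρ` is a map of the product. -/
lemma bind_eq_map_prod {α β γ : Type*} [MeasurableSpace α] [MeasurableSpace β]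
    [MeasurableSpace γ] (μ : Measure α) (ρ : Measure β) [SFinite ρ]
    {g : α × β → γ} (hg : Measurable g) :
    μ.bind (fun a => ρ.map (fun b => g (a, b))) = (μ.prod ρ).map g := by
  have hker : Measurable fun a => ρ.map (fun b => g (a, b)) := by
    refine Measure.measurable_of_measurable_coe _ fun t ht => ?_
    have : (fun a => (ρ.map fun b => g (a, b)) t)
        = fun a => ρ (Prod.mk a ⁻¹' (g ⁻¹' t)) := by
      funext a
      rw [Measure.map_apply (show Measurable fun b => g (a, b) from hg.comp measurable_prodMk_left) ht]
      rfl
    rw [this]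
    exact measurable_measure_prodMk_left (hg ht)
  ext s hs
  rw [Measure.map_apply hg hs, Measure.prod_apply (hg hs),
    Measure.bind_apply hs hker.aemeasurable]
  refine lintegral_congr fun a => ?_
  rw [Measure.map_apply (show Measurable fun b => g (a, b) from hg.comp measurable_prodMk_left) hs]
  rfl


noncomputable abbrev stdG : Measure ℝ := gaussianReal 0 1

noncomputable abbrev mu3 : Measure (ℝ × ℝ × ℝ) := stdG.prod (stdG.prod stdG)

/-- the SCM map -/
noncomputable abbrev Tmap : ℝ × ℝ × ℝ → ℝ × ℝ × ℝ :=
  fun n => (n.1, n.2.1, n.1 + n.2.1 + n.2.2)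

noncomputable abbrev projXY : ℝ × ℝ × ℝ → ℝ × ℝ := fun q => (q.1, q.2.2)

noncomputable abbrev Hfull : (ℝ × ℝ) × ℝ → ℝ × ℝ × ℝ :=
  fun q => (q.1.1, (q.2 + (q.1.2 - q.1.1) / 2, q.1.2))

lemma var_half : (NNReal.mk ((Real.sqrt 2)⁻¹ ^ 2) (sq_nonneg _)) * 1 = 1 / 2 := by
  ext
  push_cast
  rw [inv_pow, Real.sq_sqrt (by norm_num : (0:ℝ) ≤ 2)]
  norm_num

lemma rho_map : gaussianReal 0 (1 / 2)
    = stdG.map (fun x => (Real.sqrt 2)⁻¹ * x) := by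
  rw [gaussianReal_map_const_mul, mul_zero, var_half]

lemma krep (κ1 : ℝ × ℝ → Measure (ℝ × ℝ × ℝ))
    (hκ1 : ∀ p : ℝ × ℝ, κ1 p = (Measure.dirac p.1).prod
        ((gaussianReal ((p.2 - p.1) / 2) (1 / 2)).prod (Measure.dirac p.2)))
    (p : ℝ × ℝ) :
    κ1 p = (gaussianReal 0 (1 / 2)).map (fun w => Hfull (p, w)) := by
  rw [hκ1]
  have h1 : gaussianReal ((p.2 - p.1) / 2) (1 / 2)
      = (gaussianReal 0 (1 / 2)).map (· + (p.2 - p.1) / 2) := by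
    rw [gaussianReal_map_add_const, zero_add]
  rw [h1, Measure.prod_dirac, Measure.map_map (by fun_prop) (by fun_prop),
    Measure.dirac_prod, Measure.map_map (by fun_prop) (by fun_prop)]
  rfl

lemma k1meas (κ1 : ℝ × ℝ → Measure (ℝ × ℝ × ℝ))
    (hκ1 : ∀ p : ℝ × ℝ, κ1 p = (Measure.dirac p.1).prod
        ((gaussianReal ((p.2 - p.1) / 2) (1 / 2)).prod (Measure.dirac p.2)))
    {s : Set (ℝ × ℝ × ℝ)} (hs : MeasurableSet s) :
    Measurable fun p => κ1 p s := by
  have hH : Measurable Hfull := by fun_prop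
  have : (fun p => κ1 p s)
      = fun p => (gaussianReal 0 (1/2)) (Prod.mk p ⁻¹' (Hfull ⁻¹' s)) := by
    funext p
    rw [krep κ1 hκ1 p,
      Measure.map_apply (show Measurable fun w => Hfull (p, w) from hH.comp measurable_prodMk_left) hs]
    rfl
  rw [this]
  exact measurable_measure_prodMk_left (hH hs)

lemma keyP (κ1 : ℝ × ℝ → Measure (ℝ × ℝ × ℝ))
    (hκ1 : ∀ p : ℝ × ℝ, κ1 p = (Measure.dirac p.1).prod
        ((gaussianReal ((p.2 - p.1) / 2) (1 / 2)).prod (Measure.dirac p.2))) :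
    ((mu3.map Tmap).map projXY).bind κ1 = mu3.map Tmap := by
  have hT : Measurable Tmap := by fun_prop
  have hproj : Measurable projXY := by fun_prop
  have hH : Measurable Hfull := by fun_prop
  -- Step 1: the law of (X₁, Y)
  have hν : (mu3.map Tmap).map projXY
      = (stdG.prod stdG).map (fun q : ℝ × ℝ => (q.1, q.1 + Real.sqrt 2 * q.2)) := by
    rw [Measure.map_map hproj hT]
    have h1 : projXY ∘ Tmap
        = (fun q : ℝ × ℝ => (q.1, q.1 + q.2)) ∘ (Prod.map id (fun m : ℝ × ℝ => m.1 + m.2)) := by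
      funext n
      simp only [Function.comp_apply, Prod.map, id_eq]
      exact Prod.ext rfl (add_assoc _ _ _)
    rw [h1, ← Measure.map_map (by fun_prop) (by fun_prop),
      ← Measure.map_prod_map _ _ measurable_id (by fun_prop : Measurable fun m : ℝ × ℝ => m.1 + m.2),
      Measure.map_id, conv2]
    have h3 : stdG.prod (gaussianReal 0 2)
        = (stdG.prod stdG).map (Prod.map id (fun x => Real.sqrt 2 * x)) := by
      rw [← Measure.map_prod_map _ _ measurable_id (by fun_prop : Measurable fun x : ℝ => Real.sqrt 2 * x),
        Measure.map_id, gaussianReal_map_const_mul, mul_zero, var_two]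
    rw [h3, Measure.map_map (by fun_prop) (by fun_prop)]
    rfl
  rw [hν]
  have hfe : κ1 = fun p => (gaussianReal 0 (1 / 2)).map (fun w => Hfull (p, w)) :=
    funext (krep κ1 hκ1)
  rw [hfe, bind_eq_map_prod _ _ hH, rho_map,
    Measure.map_prod_map _ _ (by fun_prop : Measurable fun q : ℝ × ℝ => (q.1, q.1 + Real.sqrt 2 * q.2))
      (by fun_prop : Measurable fun x : ℝ => (Real.sqrt 2)⁻¹ * x),
    Measure.map_map hH (by fun_prop)]
  have hassoc : (stdG.prod stdG).prod stdG = mu3.map MeasurableEquiv.prodAssoc.symm := by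
    have h := Measure.prodAssoc_prod (μ := stdG) (ν := stdG) (τ := stdG)
    have hmu : (mu3 : Measure (ℝ × ℝ × ℝ)) = stdG.prod (stdG.prod stdG) := rfl
    rw [hmu, ← h, MeasurableEquiv.map_symm_map]
  rw [hassoc, Measure.map_map (by fun_prop) (by fun_prop)]
  have hK : (Hfull ∘ Prod.map (fun q : ℝ × ℝ => (q.1, q.1 + Real.sqrt 2 * q.2))
        (fun x : ℝ => (Real.sqrt 2)⁻¹ * x)) ∘ MeasurableEquiv.prodAssoc.symm
      = Tmap ∘ Prod.map id rot := by
    have h2 : Real.sqrt 2 * Real.sqrt 2 = 2 := Real.mul_self_sqrt (by norm_num)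
    funext n
    simp only [Function.comp_apply, Prod.map, MeasurableEquiv.prodAssoc,
      MeasurableEquiv.coe_mk, Equiv.prodAssoc, Equiv.coe_fn_symm_mk, id_eq, rot]
    refine Prod.ext rfl (Prod.ext ?_ ?_)
    · show (Real.sqrt 2)⁻¹ * n.2.2 + (n.1 + Real.sqrt 2 * n.2.1 - n.1) / 2
        = (n.2.1 + n.2.2) / Real.sqrt 2
      field_simp
      linear_combination n.2.1 * h2
    · show n.1 + Real.sqrt 2 * n.2.1
        = n.1 + (n.2.1 + n.2.2) / Real.sqrt 2 + (n.2.1 - n.2.2) / Real.sqrt 2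
      field_simp
      linear_combination n.2.1 * h2
  rw [hK, ← Measure.map_map hT (measurable_id.prodMap rot_measurable),
    ← Measure.map_prod_map _ _ measurable_id rot_measurable, Measure.map_id, map_rot_gauss]


lemma partA (κ1 : ℝ × ℝ → Measure (ℝ × ℝ × ℝ))
    (hκ1 : ∀ p : ℝ × ℝ, κ1 p = (Measure.dirac p.1).prod
        ((gaussianReal ((p.2 - p.1) / 2) (1 / 2)).prod (Measure.dirac p.2)))
    {A : Set (ℝ × ℝ × ℝ)} (hA : MeasurableSet A) {B : Set (ℝ × ℝ)} (hB : MeasurableSet B) :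
    ∫⁻ q in projXY ⁻¹' B, κ1 (projXY q) A ∂(mu3.map Tmap)
      = (mu3.map Tmap) (A ∩ projXY ⁻¹' B) := by
  have hproj : Measurable projXY := by fun_prop
  have hH : Measurable Hfull := by fun_prop
  have hkA : Measurable fun p => κ1 p A := k1meas κ1 hκ1 hA
  have hmeasκ : Measurable κ1 :=
    Measure.measurable_of_measurable_coe _ fun s hs => k1meas κ1 hκ1 hs
  have hpre : ∀ p : ℝ × ℝ, (fun w : ℝ => Hfull (p, w)) ⁻¹' (projXY ⁻¹' B)
      = {w : ℝ | p ∈ B} := by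
    intro p
    ext w
    simp [Hfull, projXY]
  have h1 : ∀ p ∈ B, κ1 p ((projXY ⁻¹' B)ᶜ) = 0 := by
    intro p hp
    rw [krep κ1 hκ1 p,
      Measure.map_apply (show Measurable fun w : ℝ => Hfull (p, w) from hH.comp measurable_prodMk_left) (hproj hB).compl,
      Set.preimage_compl, hpre p]
    have : ({w : ℝ | p ∈ B} : Set ℝ) = Set.univ := by
      ext w; simp [hp]
    rw [this, Set.compl_univ, measure_empty]
  have h2 : ∀ p ∉ B, κ1 p (projXY ⁻¹' B) = 0 := by
    intro p hp
    rw [krep κ1 hκ1 p,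
      Measure.map_apply (show Measurable fun w : ℝ => Hfull (p, w) from hH.comp measurable_prodMk_left) (hproj hB), hpre p]
    have : ({w : ℝ | p ∈ B} : Set ℝ) = ∅ := by
      ext w; simp [hp]
    rw [this, measure_empty]
  have hsplit : ∀ p ∈ B, κ1 p A = κ1 p (A ∩ projXY ⁻¹' B) := by
    intro p hp
    have hd := measure_inter_add_diff (μ := κ1 p) A (hproj hB)
    have hz : κ1 p (A \ projXY ⁻¹' B) = 0 :=
      measure_mono_null (Set.diff_subset_compl _ _) (h1 p hp)
    rw [← hd, hz, add_zero]
  calc ∫⁻ q in projXY ⁻¹' B, κ1 (projXY q) A ∂(mu3.map Tmap)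
      = ∫⁻ p in B, κ1 p A ∂((mu3.map Tmap).map projXY) :=
        (setLIntegral_map hB hkA hproj).symm
    _ = ∫⁻ p in B, κ1 p (A ∩ projXY ⁻¹' B) ∂((mu3.map Tmap).map projXY) :=
        setLIntegral_congr_fun_ae hB (ae_of_all _ hsplit)
    _ = ∫⁻ p, κ1 p (A ∩ projXY ⁻¹' B) ∂((mu3.map Tmap).map projXY) := by
        have : ∫⁻ p in Bᶜ, κ1 p (A ∩ projXY ⁻¹' B) ∂((mu3.map Tmap).map projXY) = 0 := by
          rw [setLIntegral_congr_fun_ae hB.compl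
            (ae_of_all _ fun p hp =>
              measure_mono_null Set.inter_subset_right (h2 p hp))]
          simp
        conv_rhs => rw [← lintegral_add_compl (fun p => κ1 p (A ∩ projXY ⁻¹' B)) hB]
        rw [this, add_zero]
    _ = (((mu3.map Tmap).map projXY).bind κ1) (A ∩ projXY ⁻¹' B) :=
        (Measure.bind_apply (hA.inter (hproj hB)) hmeasκ.aemeasurable).symm
    _ = (mu3.map Tmap) (A ∩ projXY ⁻¹' B) := by rw [keyP κ1 hκ1]


lemma partB (κ1 : ℝ × ℝ → Measure (ℝ × ℝ × ℝ))
    (hκ1 : ∀ p : ℝ × ℝ, κ1 p = (Measure.dirac p.1).prod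
        ((gaussianReal ((p.2 - p.1) / 2) (1 / 2)).prod (Measure.dirac p.2)))
    (κ2 : ℝ × ℝ × ℝ → Measure (ℝ × ℝ))
    (hκ2 : ∀ q : ℝ × ℝ × ℝ, κ2 q = Measure.dirac (q.1 + q.2.1, q.2.2))
    (p : ℝ × ℝ) :
    (κ1 p).bind κ2
      = (gaussianReal ((p.2 + p.1) / 2) (1 / 2)).prod (Measure.dirac p.2) := by
  have hH : Measurable Hfull := by fun_prop
  have hf2 : Measurable fun q : ℝ × ℝ × ℝ => (q.1 + q.2.1, q.2.2) := by fun_prop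
  have hk2 : κ2 = fun q => Measure.dirac ((fun q : ℝ × ℝ × ℝ => (q.1 + q.2.1, q.2.2)) q) :=
    funext hκ2
  rw [hk2, Measure.bind_dirac_eq_map _ hf2, krep κ1 hκ1 p,
    Measure.map_map hf2 (show Measurable fun w : ℝ => Hfull (p, w) from
      hH.comp measurable_prodMk_left), Measure.prod_dirac]
  have hm : gaussianReal ((p.2 + p.1) / 2) (1 / 2)
      = (gaussianReal 0 (1 / 2)).map (· + (p.2 + p.1) / 2) := by
    rw [gaussianReal_map_add_const, zero_add]
  rw [hm, Measure.map_map (by fun_prop) (by fun_prop)]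
  congr 1
  funext w
  exact Prod.ext (by simp only [Function.comp_apply]; ring) rfl

lemma gauss_shift :
    gaussianReal 1 (1 / 2) (Set.Iic 0) = gaussianReal 0 (1 / 2) (Set.Iic (-1)) := by
  have h : gaussianReal 1 (1 / 2) = (gaussianReal 0 (1 / 2)).map (· + 1) := by
    rw [gaussianReal_map_add_const, zero_add]
  rw [h, Measure.map_apply (by fun_prop) measurableSet_Iic]
  congr 1
  ext x
  simp only [Set.mem_preimage, Set.mem_Iic]
  constructor <;> intro <;> linarith

lemma gauss_Iic_lt :
    gaussianReal 0 (1 / 2) (Set.Iic (-1)) < gaussianReal 0 (1 / 2) (Set.Iic 0) := by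
  have hsplit : (Set.Iic (0 : ℝ)) = Set.Iic (-1) ∪ Set.Ioc (-1) 0 :=
    (Set.Iic_union_Ioc_eq_Iic (by norm_num)).symm
  have hdis : Disjoint (Set.Iic (-1 : ℝ)) (Set.Ioc (-1) 0) := Set.Iic_disjoint_Ioc le_rfl
  have hpos : 0 < gaussianReal 0 (1 / 2) (Set.Ioc (-1 : ℝ) 0) := by
    rw [gaussianReal_apply 0 (by norm_num : (1/2 : ℝ≥0) ≠ 0)]
    calc (0 : ℝ≥0∞) < gaussianPDF 0 (1 / 2) (-1) * volume (Set.Ioc (-1 : ℝ) 0) := by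
          rw [Real.volume_Ioc]
          norm_num
          exact gaussianPDF_pos _ (by norm_num) _
      _ = ∫⁻ _ in Set.Ioc (-1 : ℝ) 0, gaussianPDF 0 (1 / 2) (-1) :=
          (setLIntegral_const _ _).symm
      _ ≤ ∫⁻ x in Set.Ioc (-1 : ℝ) 0, gaussianPDF 0 (1 / 2) x := by
          refine setLIntegral_mono (measurable_gaussianPDF _ _) fun x hx => ?_
          unfold gaussianPDF
          refine ENNReal.ofReal_le_ofReal ?_
          unfold gaussianPDFReal
          refine mul_le_mul_of_nonneg_left ?_ (by positivity)
          refine Real.exp_le_exp.mpr ?_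
          have h1 : -1 < x := hx.1
          have h2 : x ≤ 0 := hx.2
          have hsq : x ^ 2 ≤ (-1 - 0 : ℝ) ^ 2 := by nlinarith
          have hc : (0:ℝ) < 2 * ((1 / 2 : ℝ≥0) : ℝ) := by
            have : (0:ℝ) < ((1 / 2 : ℝ≥0) : ℝ) := NNReal.coe_pos.mpr (by norm_num)
            linarith
          exact (div_le_div_iff_of_pos_right hc).mpr (by nlinarith)
  rw [hsplit, measure_union hdis measurableSet_Ioc]
  exact ENNReal.lt_add_right (measure_ne_top _ _) (ne_of_gt hpos)

end CompAux


/-- Failure of composition without the abstraction hypothesis.  In the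
Gaussian SCM `X₁ = N₁`, `X₂ = N₂`, `Y = X₁ + X₂ + N_Y` (independent standard normals, joint
law `ℙ` of `(X₁, X₂, Y)` on `ℝ³`):
(a) the inclusion kernel `κ₁((x₁,y), ·) = δ_{x₁} ⊗ N((y−x₁)/2, 1/2) ⊗ δ_y` is a version of
the conditional probability of `ℙ` given `(X₁, Y)` (i.e. the conditional law of `X₂` given
`X₁ = x₁, Y = y` is `N((y−x₁)/2, 1/2)`);
(b) composing `κ₁` with the abstraction kernel `κ₂((x₁,x₂,y), ·) = δ_{(x₁+x₂, y)}` yields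
`κ₃((x₁,y), ·) = N((y+x₁)/2, 1/2) ⊗ δ_y`;
(c) there is a Borel `A` such that `κ₃(·, A × ℝ)` is not `σ(X₁)`-measurable, so the
composed pair is not admissible. -/
theorem composition_fails_without_abstraction
    (P : Measure (ℝ × ℝ × ℝ)) [IsProbabilityMeasure P]
    (hP : P = Measure.map (fun p : ℝ × ℝ × ℝ => (p.1, p.2.1, p.1 + p.2.1 + p.2.2))
        ((gaussianReal 0 1).prod ((gaussianReal 0 1).prod (gaussianReal 0 1))))
    (κ1 : ℝ × ℝ → Measure (ℝ × ℝ × ℝ))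
    (hκ1 : ∀ p : ℝ × ℝ, κ1 p = (Measure.dirac p.1).prod
        ((gaussianReal ((p.2 - p.1) / 2) (1 / 2)).prod (Measure.dirac p.2)))
    (κ2 : ℝ × ℝ × ℝ → Measure (ℝ × ℝ))
    (hκ2 : ∀ q : ℝ × ℝ × ℝ, κ2 q = Measure.dirac (q.1 + q.2.1, q.2.2)) :
    -- (a) κ₁ ∘ (X₁, Y) is a regular conditional probability of ℙ given σ(X₁, Y)
    (∀ A : Set (ℝ × ℝ × ℝ), MeasurableSet A → ∀ B : Set (ℝ × ℝ), MeasurableSet B →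
      ∫⁻ q in (fun q : ℝ × ℝ × ℝ => (q.1, q.2.2)) ⁻¹' B, κ1 (q.1, q.2.2) A ∂P
        = P (A ∩ (fun q : ℝ × ℝ × ℝ => (q.1, q.2.2)) ⁻¹' B)) ∧
    -- (b) the concatenated kernel κ₃ = κ₁ ∘ κ₂
    (∀ p : ℝ × ℝ, (κ1 p).bind κ2
      = (gaussianReal ((p.2 + p.1) / 2) (1 / 2)).prod (Measure.dirac p.2)) ∧
    -- (c) the concatenation is not admissible: κ₃(·, A × ℝ) is not σ(X₁)-measurable
    (∃ A : Set ℝ, MeasurableSet A ∧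
      ¬ Measurable[MeasurableSpace.comap (fun p : ℝ × ℝ => p.1) inferInstance]
        fun p : ℝ × ℝ => ((κ1 p).bind κ2) (A ×ˢ (Set.univ : Set ℝ))) := by
  subst hP
  refine ⟨fun A hA B hB => CompAux.partA κ1 hκ1 hA hB, fun p => CompAux.partB κ1 hκ1 κ2 hκ2 p, ?_⟩
  refine ⟨Set.Iic 0, measurableSet_Iic, fun hmeas => ?_⟩
  have hf : (fun p : ℝ × ℝ => ((κ1 p).bind κ2) (Set.Iic 0 ×ˢ (Set.univ : Set ℝ)))
      = fun p : ℝ × ℝ => gaussianReal ((p.2 + p.1) / 2) (1 / 2) (Set.Iic 0) := by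
    funext p
    rw [CompAux.partB κ1 hκ1 κ2 hκ2 p, Measure.prod_prod, measure_univ, mul_one]
  rw [hf] at hmeas
  obtain ⟨t, ht, hteq⟩ := hmeas (measurableSet_singleton (gaussianReal 0 (1 / 2) (Set.Iic 0)))
  have h00 : ((0 : ℝ), (0 : ℝ)) ∈ (fun p : ℝ × ℝ => p.1) ⁻¹' t := by
    rw [hteq]
    show gaussianReal (((0:ℝ) + 0) / 2) (1 / 2) (Set.Iic 0)
      ∈ ({gaussianReal 0 (1 / 2) (Set.Iic 0)} : Set ℝ≥0∞)
    norm_num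
  have h02 : ((0 : ℝ), (2 : ℝ)) ∈ (fun p : ℝ × ℝ => p.1) ⁻¹' t := h00
  rw [hteq] at h02
  have heq : gaussianReal 1 (1 / 2) (Set.Iic 0) = gaussianReal 0 (1 / 2) (Set.Iic 0) := by
    have : ((2 : ℝ) + 0) / 2 = 1 := by norm_num
    simpa [this] using h02
  rw [CompAux.gauss_shift] at heq
  exact absurd heq (ne_of_lt CompAux.gauss_Iic_lt)
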